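/- For any ∀⁺ type A of System F, the set |A| is stable under β-equivalence: if t ∈ |A| and t ≃_β t', then t' ∈ |A|. -/

import Mathlib

/-! Untyped λ-calculus (de Bruijn) and System F realizability semantics. -/

/-- Untyped λ-terms in de Bruijn notation. -/
inductive Lam : Type
  | var : ℕ → Lam
  | app : Lam → Lam → Lam
  | lam : Lam → Lam
deriving DecidableEq

namespace Lam

/-- Shift the free variables ≥ `d` up by one. -/
def lift (d : ℕ) : Lam → Lam
  | var n => if n < d then var n else var (n + 1)
  | app t u => app (lift d t) (lift d u)
  | lam t => lam (lift (d + 1) t)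

/-- Capture-avoiding substitution of `u` for the variable `k` (de Bruijn). -/
def subst : Lam → ℕ → Lam → Lam
  | var n, k, u => if n = k then u else if k < n then var (n - 1) else var n
  | app t s, k, u => app (subst t k u) (subst s k u)
  | lam t, k, u => lam (subst t (k + 1) (lift 0 u))

/-- Free variables of a term. -/
def fv : Lam → Finset ℕ
  | var n => {n}
  | app t u => fv t ∪ fv u
  | lam t => ((fv t).erase 0).image (· - 1)

/-- One-step β-reduction. -/
inductive Beta : Lam → Lam → Prop
  | beta (t u : Lam) : Beta (app (lam t) u) (subst t 0 u)
  | appL {t t' : Lam} (u : Lam) : Beta t t' → Beta (app t u) (app t' u)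
  | appR (t : Lam) {u u' : Lam} : Beta u u' → Beta (app t u) (app t u')
  | lam {t t' : Lam} : Beta t t' → Beta (lam t) (lam t')

/-- Many-step β-reduction. -/
def BetaStar : Lam → Lam → Prop := Relation.ReflTransGen Beta

/-- β-equivalence. -/
def BetaEq : Lam → Lam → Prop := Relation.EqvGen Beta

/-- One-step η-reduction. -/
inductive Eta : Lam → Lam → Prop
  | eta (t : Lam) : Eta (lam (app (lift 0 t) (var 0))) t
  | appL {t t' : Lam} (u : Lam) : Eta t t' → Eta (app t u) (app t' u)
  | appR (t : Lam) {u u' : Lam} : Eta u u' → Eta (app t u) (app t u')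
  | lam {t t' : Lam} : Eta t t' → Eta (lam t) (lam t')

/-- βη-equivalence. -/
def BetaEtaEq : Lam → Lam → Prop := Relation.EqvGen (fun t u => Beta t u ∨ Eta t u)

/-- One-step weak head reduction: contracts the weak head redex `(λ t) u`
possibly applied to further arguments. -/
inductive Whr : Lam → Lam → Prop
  | head (t u : Lam) : Whr (app (lam t) u) (subst t 0 u)
  | appL {t t' : Lam} (u : Lam) : Whr t t' → Whr (app t u) (app t' u)

/-- Many-step weak head reduction (`≻_f`). -/
def WhrStar : Lam → Lam → Prop := Relation.ReflTransGen Whr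

/-- A term is normal when it has no β-redex. -/
def Normal (t : Lam) : Prop := ∀ u, ¬ Beta t u

def Normalizable (t : Lam) : Prop := ∃ u, BetaStar t u ∧ Normal u

/-- `(t)v₁…vₘ`. -/
def appList (t : Lam) (l : List Lam) : Lam := l.foldl app t

end Lam

/-- A set of λ-terms is saturated when it is closed under weak-head-expansion. -/
def Saturated (G : Set Lam) : Prop := ∀ t u : Lam, Lam.WhrStar t u → u ∈ G → t ∈ G

/-- A set of λ-terms is β-saturated when it is closed under β-expansion. -/
def BetaSaturated (G : Set Lam) : Prop := ∀ t u : Lam, Lam.BetaStar t u → u ∈ G → t ∈ G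

/-- `G → G' = {u : ∀ t ∈ G, (u)t ∈ G'}`. -/
def arrowSet (G G' : Set Lam) : Set Lam := {u | ∀ t ∈ G, Lam.app u t ∈ G'}

/-- Types of System F (de Bruijn type variables). -/
inductive Ty : Type
  | var : ℕ → Ty
  | arr : Ty → Ty → Ty
  | all : Ty → Ty
deriving DecidableEq

namespace Ty

/-- Shift the free type variables ≥ `d` up by one. -/
def lift (d : ℕ) : Ty → Ty
  | var n => if n < d then var n else var (n + 1)
  | arr A B => arr (lift d A) (lift d B)
  | all A => all (lift (d + 1) A)

/-- Capture-avoiding substitution of the type `C` for the type variable `k`. -/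
def subst : Ty → ℕ → Ty → Ty
  | var n, k, C => if n = k then C else if k < n then var (n - 1) else var n
  | arr A B, k, C => arr (subst A k C) (subst B k C)
  | all A, k, C => all (subst A (k + 1) (lift 0 C))

/-- Free type variables. -/
def fv : Ty → Finset ℕ
  | var n => {n}
  | arr A B => fv A ∪ fv B
  | all A => ((fv A).erase 0).image (· - 1)

end Ty

mutual
  /-- ∀⁺ types: types with positive quantifiers. -/
  inductive PosTy : Ty → Prop
    | var (n : ℕ) : PosTy (Ty.var n)
    | arr {B A : Ty} : NegTy B → PosTy A → PosTy (Ty.arr B A)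
    | all {A : Ty} : PosTy A → 0 ∈ A.fv → PosTy (Ty.all A)
  /-- ∀⁻ types: types with negative quantifiers. -/
  inductive NegTy : Ty → Prop
    | var (n : ℕ) : NegTy (Ty.var n)
    | arr {B A : Ty} : PosTy B → NegTy A → NegTy (Ty.arr B A)
end

/-- Typing contexts: a partial assignment of types to (de Bruijn) term variables. -/
def Ctx : Type := ℕ → Option Ty

def Ctx.empty : Ctx := fun _ => none

def Ctx.cons (B : Ty) (Γ : Ctx) : Ctx := fun n =>
  match n with
  | 0 => some B
  | n + 1 => Γ n

/-- Shift all type variables of a context (used for ∀-introduction: the fresh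
type variable `0` does not occur in the shifted context). -/
def Ctx.liftTy (Γ : Ctx) : Ctx := fun n => (Γ n).map (Ty.lift 0)

/-- Curry-style typing of System F. -/
inductive TyJ : Ctx → Lam → Ty → Prop
  | var {Γ : Ctx} {x : ℕ} {A : Ty} : Γ x = some A → TyJ Γ (Lam.var x) A
  | lam {Γ : Ctx} {B C : Ty} {t : Lam} :
      TyJ (Ctx.cons B Γ) t C → TyJ Γ (Lam.lam t) (Ty.arr B C)
  | app {Γ : Ctx} {B C : Ty} {u v : Lam} :
      TyJ Γ u (Ty.arr B C) → TyJ Γ v B → TyJ Γ (Lam.app u v) C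
  | allI {Γ : Ctx} {A : Ty} {t : Lam} :
      TyJ (Ctx.liftTy Γ) t A → TyJ Γ t (Ty.all A)
  | allE {Γ : Ctx} {A : Ty} {t : Lam} (C : Ty) :
      TyJ Γ t (Ty.all A) → TyJ Γ t (Ty.subst A 0 C)

/-- System F0 : System F where ∀-elimination only instantiates by type variables. -/
inductive TyJ0 : Ctx → Lam → Ty → Prop
  | var {Γ : Ctx} {x : ℕ} {A : Ty} : Γ x = some A → TyJ0 Γ (Lam.var x) A
  | lam {Γ : Ctx} {B C : Ty} {t : Lam} :
      TyJ0 (Ctx.cons B Γ) t C → TyJ0 Γ (Lam.lam t) (Ty.arr B C)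
  | app {Γ : Ctx} {B C : Ty} {u v : Lam} :
      TyJ0 Γ u (Ty.arr B C) → TyJ0 Γ v B → TyJ0 Γ (Lam.app u v) C
  | allI {Γ : Ctx} {A : Ty} {t : Lam} :
      TyJ0 (Ctx.liftTy Γ) t A → TyJ0 Γ t (Ty.all A)
  | allE {Γ : Ctx} {A : Ty} {t : Lam} (Y : ℕ) :
      TyJ0 Γ t (Ty.all A) → TyJ0 Γ t (Ty.subst A 0 (Ty.var Y))

/-- Interpretations: assignments of sets of λ-terms to type variables. -/
def Interp : Type := ℕ → Set Lam

def Interp.cons (G : Set Lam) (I : Interp) : Interp := fun n =>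
  match n with
  | 0 => G
  | n + 1 => I n

/-- Interpretation of types, parameterized by the admissibility class `C` of
sets used to interpret type variables (e.g. `Saturated`). -/
def interpC (C : Set Lam → Prop) : Ty → Interp → Set Lam
  | Ty.var n, I => I n
  | Ty.arr A B, I => arrowSet (interpC C A I) (interpC C B I)
  | Ty.all A, I => ⋂ (G : Set Lam) (_ : C G), interpC C A (Interp.cons G I)

/-- Girard–Krivine interpretation `|A|_I` with saturated sets. -/
def interp : Ty → Interp → Set Lam := interpC Saturated

/-- `|A|`, the intersection of `|A|_I` over all admissible interpretations. -/
def SemC (C : Set Lam → Prop) (A : Ty) : Set Lam :=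
  {t | ∀ I : Interp, (∀ n, C (I n)) → t ∈ interpC C A I}

/-- `|A| = ⋂_I |A|_I` over interpretations into saturated sets. -/
def Sem (A : Ty) : Set Lam := SemC Saturated A

/-! ### Section A: substitution calculus -/

namespace Lam

def upr (ρ : ℕ → ℕ) : ℕ → ℕ
  | 0 => 0
  | n+1 => ρ n + 1

def ren (ρ : ℕ → ℕ) : Lam → Lam
  | var n => var (ρ n)
  | app t u => app (ren ρ t) (ren ρ u)
  | lam t => lam (ren (upr ρ) t)

def ups (σ : ℕ → Lam) : ℕ → Lam
  | 0 => var 0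
  | n+1 => ren Nat.succ (σ n)

def msub (σ : ℕ → Lam) : Lam → Lam
  | var n => σ n
  | app t u => app (msub σ t) (msub σ u)
  | lam t => lam (msub (ups σ) t)

theorem ren_congr {ρ ρ' : ℕ → ℕ} (t : Lam) (h : ∀ n, ρ n = ρ' n) :
    ren ρ t = ren ρ' t := by
  induction t generalizing ρ ρ' with
  | var n => simp [ren, h]
  | app a b iha ihb => simp [ren, iha h, ihb h]
  | lam a ih =>
    simp only [ren, lam.injEq]
    exact ih (fun n => by cases n <;> simp [upr, h])

theorem msub_congr {σ σ' : ℕ → Lam} (t : Lam) (h : ∀ n, σ n = σ' n) :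
    msub σ t = msub σ' t := by
  induction t generalizing σ σ' with
  | var n => simp [msub, h]
  | app a b iha ihb => simp [msub, iha h, ihb h]
  | lam a ih =>
    simp only [msub, lam.injEq]
    exact ih (fun n => by cases n <;> simp [ups, h])

theorem ren_ren (ρ ρ' : ℕ → ℕ) (t : Lam) :
    ren ρ' (ren ρ t) = ren (fun n => ρ' (ρ n)) t := by
  induction t generalizing ρ ρ' with
  | var n => simp [ren]
  | app a b iha ihb => simp [ren, iha, ihb]
  | lam a ih =>
    simp only [ren, lam.injEq, ih]
    exact ren_congr _ (fun n => by cases n <;> simp [upr])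

theorem msub_ren (σ : ℕ → Lam) (ρ : ℕ → ℕ) (t : Lam) :
    msub σ (ren ρ t) = msub (fun n => σ (ρ n)) t := by
  induction t generalizing ρ σ with
  | var n => simp [ren, msub]
  | app a b iha ihb => simp [ren, msub, iha, ihb]
  | lam a ih =>
    simp only [ren, msub, lam.injEq, ih]
    exact msub_congr _ (fun n => by cases n <;> simp [upr, ups])

theorem ren_msub (ρ : ℕ → ℕ) (σ : ℕ → Lam) (t : Lam) :
    ren ρ (msub σ t) = msub (fun n => ren ρ (σ n)) t := by
  induction t generalizing ρ σ with
  | var n => simp [ren, msub]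
  | app a b iha ihb => simp [ren, msub, iha, ihb]
  | lam a ih =>
    simp only [ren, msub, lam.injEq, ih]
    refine msub_congr _ (fun n => ?_)
    cases n with
    | zero => simp [ups, ren, upr]
    | succ n => simp [ups, ren_ren]; exact ren_congr _ (fun m => by simp [upr])

theorem msub_msub (σ σ' : ℕ → Lam) (t : Lam) :
    msub σ' (msub σ t) = msub (fun n => msub σ' (σ n)) t := by
  induction t generalizing σ σ' with
  | var n => simp [msub]
  | app a b iha ihb => simp [msub, iha, ihb]
  | lam a ih =>
    simp only [msub, lam.injEq, ih]
    refine msub_congr _ (fun n => ?_)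
    cases n with
    | zero => simp [ups, msub]
    | succ n => simp [ups, msub_ren, ren_msub]

theorem ren_eq_msub (ρ : ℕ → ℕ) (t : Lam) : ren ρ t = msub (fun n => var (ρ n)) t := by
  induction t generalizing ρ with
  | var n => simp [ren, msub]
  | app a b iha ihb => simp [ren, msub, iha, ihb]
  | lam a ih =>
    simp only [ren, msub, lam.injEq, ih]
    exact msub_congr _ (fun n => by cases n <;> simp [upr, ups, ren])

theorem lift_eq_ren (d : ℕ) (t : Lam) :
    lift d t = ren (fun n => if n < d then n else n + 1) t := by
  induction t generalizing d with
  | var n => by_cases h : n < d <;> simp [lift, ren, h]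
  | app a b iha ihb => simp [lift, ren, iha, ihb]
  | lam a ih =>
    simp only [lift, ren, lam.injEq, ih]
    refine ren_congr _ (fun n => ?_)
    cases n with
    | zero => simp [upr]
    | succ n =>
      simp only [upr]
      by_cases h : n < d <;> simp [h, Nat.succ_lt_succ_iff]

/-- the one-variable substitution as a simultaneous substitution -/
def sub1 (k : ℕ) (u : Lam) : ℕ → Lam :=
  fun n => if n = k then u else if k < n then var (n-1) else var n

theorem subst_eq_msub (t : Lam) (k : ℕ) (u : Lam) :
    subst t k u = msub (sub1 k u) t := by
  induction t generalizing k u with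
  | var n => simp [subst, msub, sub1]
  | app a b iha ihb => simp [subst, msub, iha, ihb]
  | lam a ih =>
    simp only [subst, msub, lam.injEq, ih]
    refine msub_congr _ (fun n => ?_)
    cases n with
    | zero => simp [ups, sub1]
    | succ n =>
      simp only [ups, sub1]
      rcases Nat.lt_trichotomy n k with h | h | h
      · have h1 : ¬ (n = k) := by omega
        have h2 : ¬ (k < n) := by omega
        have h3 : ¬ (n + 1 = k + 1) := by omega
        have h4 : ¬ (k + 1 < n + 1) := by omega
        simp [h1, h2, h3, h4, ren]
      · subst h
        simp [lift_eq_ren, ren_ren]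
      · have h1 : ¬ (n = k) := by omega
        have h3 : ¬ (n + 1 = k + 1) := by omega
        have h4 : (k + 1 < n + 1) := by omega
        simp only [h1, h, h3, h4, if_true, if_false, ren]
        congr 1
        omega

theorem msub_id (t : Lam) : msub var t = t := by
  induction t with
  | var n => simp [msub]
  | app a b iha ihb => simp [msub, iha, ihb]
  | lam a ih =>
    simp only [msub, lam.injEq]
    rw [msub_congr _ (fun m => by cases m <;> simp [ups, ren] : ∀ m, ups var m = var m)]
    exact ih

theorem msub_subst0 (σ : ℕ → Lam) (t u : Lam) :
    msub σ (subst t 0 u) = subst (msub (ups σ) t) 0 (msub σ u) := by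
  rw [subst_eq_msub, subst_eq_msub, msub_msub, msub_msub]
  refine msub_congr _ (fun n => ?_)
  show msub σ (sub1 0 u n) = msub (sub1 0 (msub σ u)) (ups σ n)
  cases n with
  | zero => simp [sub1, msub, ups]
  | succ n =>
    have e1 : sub1 0 u (n+1) = var n := by simp [sub1]
    rw [e1, show ups σ (n+1) = ren Nat.succ (σ n) from rfl, msub_ren,
        msub_congr (σ n) (fun m => by simp [sub1] : ∀ m, sub1 0 (msub σ u) (Nat.succ m) = var m)]
    show σ n = msub (fun m => var m) (σ n)
    exact (msub_id (σ n)).symm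

theorem ren_subst0 (ρ : ℕ → ℕ) (t u : Lam) :
    ren ρ (subst t 0 u) = subst (ren (upr ρ) t) 0 (ren ρ u) := by
  rw [ren_eq_msub, ren_eq_msub, ren_eq_msub, msub_subst0]
  congr 1
  refine msub_congr _ (fun n => ?_)
  cases n <;> simp [ups, upr, ren]

/-! free variables -/

theorem mem_fv_lam {t : Lam} {x : ℕ} : x ∈ fv (lam t) ↔ x + 1 ∈ fv t := by
  simp only [fv, Finset.mem_image, Finset.mem_erase]
  constructor
  · rintro ⟨y, ⟨hy0, hyt⟩, rfl⟩
    have : y - 1 + 1 = y := by omega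
    rwa [this]
  · intro h
    exact ⟨x+1, ⟨by omega, h⟩, by omega⟩

theorem mem_fv_ren {ρ : ℕ → ℕ} {t : Lam} {x : ℕ} :
    x ∈ fv (ren ρ t) ↔ ∃ y ∈ fv t, ρ y = x := by
  induction t generalizing ρ x with
  | var n => simp [ren, fv, eq_comm]
  | app a b iha ihb =>
    simp only [ren, fv, Finset.mem_union, iha, ihb]
    constructor
    · rintro (⟨y, hy, rfl⟩ | ⟨y, hy, rfl⟩) <;> exact ⟨y, by simp [hy], rfl⟩
    · rintro ⟨y, hy, rfl⟩
      rcases hy with h | h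
      · exact Or.inl ⟨y, h, rfl⟩
      · exact Or.inr ⟨y, h, rfl⟩
  | lam a ih =>
    rw [show ren ρ (lam a) = lam (ren (upr ρ) a) from rfl, mem_fv_lam, ih]
    constructor
    · rintro ⟨y, hy, hu⟩
      cases y with
      | zero => simp [upr] at hu
      | succ y =>
        simp only [upr] at hu
        exact ⟨y, mem_fv_lam.2 (by rwa [show y + 1 = y.succ from rfl]), by omega⟩
    · rintro ⟨y, hy, rfl⟩
      exact ⟨y + 1, mem_fv_lam.1 hy, by simp [upr]⟩

theorem mem_fv_msub {σ : ℕ → Lam} {t : Lam} {x : ℕ} :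
    x ∈ fv (msub σ t) ↔ ∃ y ∈ fv t, x ∈ fv (σ y) := by
  induction t generalizing σ x with
  | var n => simp [msub, fv]
  | app a b iha ihb =>
    simp only [msub, fv, Finset.mem_union, iha, ihb]
    constructor
    · rintro (⟨y, hy, h⟩ | ⟨y, hy, h⟩) <;> exact ⟨y, by simp [hy], h⟩
    · rintro ⟨y, hy, h⟩
      rcases hy with h' | h'
      · exact Or.inl ⟨y, h', h⟩
      · exact Or.inr ⟨y, h', h⟩
  | lam a ih =>
    rw [show msub σ (lam a) = lam (msub (ups σ) a) from rfl, mem_fv_lam, ih]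
    constructor
    · rintro ⟨y, hy, hu⟩
      cases y with
      | zero => simp [ups, fv] at hu
      | succ y =>
        simp only [ups] at hu
        rcases mem_fv_ren.1 hu with ⟨z, hz, hzz⟩
        have : z = x := by omega
        subst this
        exact ⟨y, mem_fv_lam.2 hy, hz⟩
    · rintro ⟨y, hy, h⟩
      refine ⟨y + 1, mem_fv_lam.1 hy, ?_⟩
      simp only [ups]
      exact mem_fv_ren.2 ⟨x, h, rfl⟩

theorem msub_congr_fv {σ σ' : ℕ → Lam} {t : Lam} (h : ∀ y ∈ fv t, σ y = σ' y) :
    msub σ t = msub σ' t := by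
  induction t generalizing σ σ' with
  | var n => simpa [msub, fv] using h n (by simp [fv])
  | app a b iha ihb =>
    simp only [msub, app.injEq]
    exact ⟨iha (fun y hy => h y (by simp [fv, hy])),
           ihb (fun y hy => h y (by simp [fv, hy]))⟩
  | lam a ih =>
    simp only [msub, lam.injEq]
    refine ih (fun y hy => ?_)
    cases y with
    | zero => simp [ups]
    | succ y =>
      simp only [ups]
      rw [h y (mem_fv_lam.2 hy)]

end Lam
/-! ### Section B: reductions under substitution, congruences, free variables -/

namespace Lam

theorem Beta.msub {t u : Lam} (h : Beta t u) (σ : ℕ → Lam) :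
    Beta (msub σ t) (msub σ u) := by
  induction h generalizing σ with
  | beta t u =>
    rw [msub_subst0]
    exact Beta.beta _ _
  | appL u _ ih => exact Beta.appL _ (ih σ)
  | appR t _ ih => exact Beta.appR _ (ih σ)
  | lam _ ih => exact Beta.lam (ih (ups σ))

theorem Whr.msub {t u : Lam} (h : Whr t u) (σ : ℕ → Lam) :
    Whr (msub σ t) (msub σ u) := by
  induction h generalizing σ with
  | head t u =>
    rw [msub_subst0]
    exact Whr.head _ _
  | appL u _ ih => exact Whr.appL _ (ih σ)

theorem WhrStar.msub {t u : Lam} (h : WhrStar t u) (σ : ℕ → Lam) :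
    WhrStar (msub σ t) (msub σ u) := by
  induction h with
  | refl => exact Relation.ReflTransGen.refl
  | tail _ h2 ih => exact ih.tail (h2.msub σ)

theorem BetaStar.msub {t u : Lam} (h : BetaStar t u) (σ : ℕ → Lam) :
    BetaStar (msub σ t) (msub σ u) := by
  induction h with
  | refl => exact Relation.ReflTransGen.refl
  | tail _ h2 ih => exact ih.tail (h2.msub σ)

theorem BetaEq.msub {t u : Lam} (h : BetaEq t u) (σ : ℕ → Lam) :
    BetaEq (msub σ t) (msub σ u) := by
  induction h with
  | rel _ _ h => exact Relation.EqvGen.rel _ _ (h.msub σ)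
  | refl _ => exact Relation.EqvGen.refl _
  | symm _ _ _ ih => exact ih.symm
  | trans _ _ _ _ _ ih1 ih2 => exact ih1.trans _ _ _ ih2

theorem Whr.toBeta {t u : Lam} (h : Whr t u) : Beta t u := by
  induction h with
  | head t u => exact Beta.beta t u
  | appL u _ ih => exact Beta.appL u ih

theorem WhrStar.toBetaStar {t u : Lam} (h : WhrStar t u) : BetaStar t u := by
  induction h with
  | refl => exact Relation.ReflTransGen.refl
  | tail _ h2 ih => exact ih.tail h2.toBeta

theorem WhrStar.appL {t t' : Lam} (u : Lam) (h : WhrStar t t') :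
    WhrStar (app t u) (app t' u) := by
  induction h with
  | refl => exact Relation.ReflTransGen.refl
  | tail _ h2 ih => exact ih.tail (Whr.appL u h2)

theorem BetaStar.appL {t t' : Lam} (u : Lam) (h : BetaStar t t') :
    BetaStar (app t u) (app t' u) := by
  induction h with
  | refl => exact Relation.ReflTransGen.refl
  | tail _ h2 ih => exact ih.tail (Beta.appL u h2)

theorem BetaStar.appR (t : Lam) {u u' : Lam} (h : BetaStar u u') :
    BetaStar (app t u) (app t u') := by
  induction h with
  | refl => exact Relation.ReflTransGen.refl
  | tail _ h2 ih => exact ih.tail (Beta.appR t h2)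

theorem BetaStar.lamCong {t t' : Lam} (h : BetaStar t t') :
    BetaStar (lam t) (lam t') := by
  induction h with
  | refl => exact Relation.ReflTransGen.refl
  | tail _ h2 ih => exact ih.tail (Beta.lam h2)

theorem BetaStar.appCong {t t' u u' : Lam} (h1 : BetaStar t t') (h2 : BetaStar u u') :
    BetaStar (app t u) (app t' u') :=
  (h1.appL u).trans (BetaStar.appR t' h2)

theorem BetaStar.toBetaEq {t u : Lam} (h : BetaStar t u) : BetaEq t u := by
  induction h with
  | refl => exact Relation.EqvGen.refl _
  | tail _ h2 ih => exact ih.trans _ _ _ (Relation.EqvGen.rel _ _ h2)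

theorem BetaEq.appCong {t t' u u' : Lam} (h1 : BetaEq t t') (h2 : BetaEq u u') :
    BetaEq (app t u) (app t' u') := by
  have l1 : BetaEq (app t u) (app t' u) := by
    clear h2
    induction h1 with
    | rel _ _ h => exact Relation.EqvGen.rel _ _ (Beta.appL _ h)
    | refl _ => exact Relation.EqvGen.refl _
    | symm _ _ _ ih => exact ih.symm
    | trans _ _ _ _ _ ih1 ih2 => exact ih1.trans _ _ _ ih2
  have l2 : BetaEq (app t' u) (app t' u') := by
    clear h1 l1
    induction h2 with
    | rel _ _ h => exact Relation.EqvGen.rel _ _ (Beta.appR _ h)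
    | refl _ => exact Relation.EqvGen.refl _
    | symm _ _ _ ih => exact ih.symm
    | trans _ _ _ _ _ ih1 ih2 => exact ih1.trans _ _ _ ih2
  exact l1.trans _ _ _ l2

/-- free variables only shrink along β-reduction -/
theorem Beta.fv_subset {t u : Lam} (h : Beta t u) : fv u ⊆ fv t := by
  induction h with
  | beta t u =>
    intro x hx
    rw [subst_eq_msub] at hx
    rcases mem_fv_msub.1 hx with ⟨y, hy, hxy⟩
    cases y with
    | zero =>
      have e : sub1 0 u 0 = u := by simp [sub1]
      rw [e] at hxy
      simp only [fv, Finset.mem_union]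
      exact Or.inr hxy
    | succ y =>
      have : sub1 0 u (y+1) = var y := by simp [sub1]
      rw [this] at hxy
      simp only [fv, Finset.mem_singleton] at hxy
      subst hxy
      simp only [fv, Finset.mem_union]
      exact Or.inl (mem_fv_lam.2 hy)
  | appL u _ ih =>
    intro x hx
    simp only [fv, Finset.mem_union] at hx ⊢
    rcases hx with h | h
    · exact Or.inl (ih h)
    · exact Or.inr h
  | appR t _ ih =>
    intro x hx
    simp only [fv, Finset.mem_union] at hx ⊢
    rcases hx with h | h
    · exact Or.inl h
    · exact Or.inr (ih h)
  | lam _ ih =>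
    intro x hx
    exact mem_fv_lam.2 (ih (mem_fv_lam.1 hx))

theorem BetaStar.fv_subset {t u : Lam} (h : BetaStar t u) : fv u ⊆ fv t := by
  induction h with
  | refl => exact subset_rfl
  | tail _ h2 ih => exact h2.fv_subset.trans ih

end Lam
/-! ### Section C: Church–Rosser for β -/

namespace Lam

inductive Par : Lam → Lam → Prop
  | var (n : ℕ) : Par (var n) (var n)
  | app {t t' u u' : Lam} : Par t t' → Par u u' → Par (app t u) (app t' u')
  | lam {t t' : Lam} : Par t t' → Par (lam t) (lam t')
  | beta {t t' u u' : Lam} : Par t t' → Par u u' → Par (app (lam t) u) (subst t' 0 u')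

theorem parRefl (t : Lam) : Par t t := by
  induction t with
  | var n => exact Par.var n
  | app a b iha ihb => exact Par.app iha ihb
  | lam a ih => exact Par.lam ih

theorem parMsub {t t' : Lam} (h : Par t t') {σ σ' : ℕ → Lam}
    (hσ : ∀ n, Par (σ n) (σ' n)) : Par (msub σ t) (msub σ' t') := by
  induction h generalizing σ σ' with
  | var n => exact hσ n
  | app _ _ ih1 ih2 => exact Par.app (ih1 hσ) (ih2 hσ)
  | lam _ ih =>
    refine Par.lam (ih ?_)
    intro n
    cases n with
    | zero => exact Par.var 0
    | succ n =>
      show Par (ren Nat.succ (σ n)) (ren Nat.succ (σ' n))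
      -- parallel reduction is stable under renaming
      have : ∀ {a b : Lam}, Par a b → ∀ ρ, Par (ren ρ a) (ren ρ b) := by
        intro a b hab
        induction hab with
        | var n => intro ρ; exact parRefl _
        | app _ _ ih1 ih2 => intro ρ; exact Par.app (ih1 ρ) (ih2 ρ)
        | lam _ ih => intro ρ; exact Par.lam (ih _)
        | beta _ _ ih1 ih2 =>
          intro ρ
          rw [ren_subst0]
          exact Par.beta (ih1 _) (ih2 _)
      exact this (hσ n) _
  | beta _ _ ih1 ih2 =>
    rw [msub_subst0]
    refine Par.beta (ih1 ?_) (ih2 hσ)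
    intro n
    cases n with
    | zero => exact Par.var 0
    | succ n =>
      show Par (ren Nat.succ (σ n)) (ren Nat.succ (σ' n))
      have : ∀ {a b : Lam}, Par a b → ∀ ρ, Par (ren ρ a) (ren ρ b) := by
        intro a b hab
        induction hab with
        | var n => intro ρ; exact parRefl _
        | app _ _ ih1 ih2 => intro ρ; exact Par.app (ih1 ρ) (ih2 ρ)
        | lam _ ih => intro ρ; exact Par.lam (ih _)
        | beta _ _ ih1 ih2 =>
          intro ρ
          rw [ren_subst0]
          exact Par.beta (ih1 _) (ih2 _)
      exact this (hσ n) _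

theorem parSubst {t t' u u' : Lam} (h1 : Par t t') (h2 : Par u u') :
    Par (subst t 0 u) (subst t' 0 u') := by
  rw [subst_eq_msub, subst_eq_msub]
  refine parMsub h1 ?_
  intro n
  cases n with
  | zero =>
    have e : ∀ v : Lam, sub1 0 v 0 = v := fun v => by simp [sub1]
    rw [e, e]; exact h2
  | succ n =>
    have e : ∀ v : Lam, sub1 0 v (n+1) = var n := fun v => by simp [sub1]
    rw [e, e]; exact parRefl _

/-- complete development -/
def cd : Lam → Lam
  | var n => var n
  | lam t => lam (cd t)
  | app (lam t) u => subst (cd t) 0 (cd u)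
  | app (var n) u => app (var n) (cd u)
  | app (app a b) u => app (cd (app a b)) (cd u)

theorem parLamInv {t v : Lam} (h : Par (lam t) v) : ∃ t', v = lam t' ∧ Par t t' := by
  cases h with
  | lam h => exact ⟨_, rfl, h⟩

theorem parCd {t u : Lam} (h : Par t u) : Par u (cd t) := by
  induction h with
  | var n => exact Par.var n
  | lam _ ih => exact Par.lam ih
  | beta h1 h2 ih1 ih2 =>
    show Par _ (Lam.cd (app (lam _) _))
    rw [show Lam.cd (app (lam _) _) = subst (Lam.cd _) 0 (Lam.cd _) from rfl]
    exact parSubst ih1 ih2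
  | @app t t' u u' h1 h2 ih1 ih2 =>
    cases t with
    | var n =>
      cases h1 with
      | var => exact Par.app (Par.var n) ih2
    | app a b =>
      exact Par.app ih1 ih2
    | lam a =>
      rcases parLamInv h1 with ⟨a', rfl, ha⟩
      show Par _ (Lam.cd (app (lam a) u))
      rw [show Lam.cd (app (lam a) u) = subst (Lam.cd a) 0 (Lam.cd u) from rfl]
      cases ih1 with
      | lam ih1' => exact Par.beta ih1' ih2

theorem parDiamond {t u v : Lam} (h1 : Par t u) (h2 : Par t v) :
    ∃ w, Par u w ∧ Par v w := ⟨cd t, parCd h1, parCd h2⟩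

def ParStar := Relation.ReflTransGen Par

theorem parStrip {t u v : Lam} (h1 : Par t u) (h2 : ParStar t v) :
    ∃ w, ParStar u w ∧ Par v w := by
  induction h2 generalizing u with
  | refl => exact ⟨u, Relation.ReflTransGen.refl, h1⟩
  | tail _ hbc ih =>
    rcases ih h1 with ⟨w, hw1, hw2⟩
    rcases parDiamond hbc hw2 with ⟨z, hz1, hz2⟩
    exact ⟨z, hw1.tail hz2, hz1⟩

theorem ParStar.confluent {t u v : Lam} (h1 : ParStar t u) (h2 : ParStar t v) :
    ∃ w, ParStar u w ∧ ParStar v w := by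
  induction h1 generalizing v with
  | refl => exact ⟨v, h2, Relation.ReflTransGen.refl⟩
  | tail _ hbc ih =>
    rcases ih h2 with ⟨w, hw1, hw2⟩
    rcases parStrip hbc hw1 with ⟨z, hz1, hz2⟩
    exact ⟨z, hz1, hw2.tail hz2⟩

theorem betaToPar {t u : Lam} (h : Beta t u) : Par t u := by
  induction h with
  | beta t u => exact Par.beta (parRefl t) (parRefl u)
  | appL u _ ih => exact Par.app ih (parRefl u)
  | appR t _ ih => exact Par.app (parRefl t) ih
  | lam _ ih => exact Par.lam ih

theorem parToBetaStar {t u : Lam} (h : Par t u) : BetaStar t u := by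
  induction h with
  | var n => exact Relation.ReflTransGen.refl
  | app _ _ ih1 ih2 => exact BetaStar.appCong ih1 ih2
  | lam _ ih => exact BetaStar.lamCong ih
  | @beta t t' u u' _ _ ih1 ih2 =>
    have : BetaStar (app (lam t) u) (app (lam t') u') :=
      BetaStar.appCong (BetaStar.lamCong ih1) ih2
    exact this.tail (Beta.beta t' u')

theorem BetaStar.toParStar {t u : Lam} (h : BetaStar t u) : ParStar t u := by
  induction h with
  | refl => exact Relation.ReflTransGen.refl
  | tail _ h2 ih => exact ih.tail (betaToPar h2)

theorem ParStar.toBetaStar {t u : Lam} (h : ParStar t u) : BetaStar t u := by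
  induction h with
  | refl => exact Relation.ReflTransGen.refl
  | tail _ h2 ih => exact ih.trans (parToBetaStar h2)

theorem BetaStar.confluent {t u v : Lam} (h1 : BetaStar t u) (h2 : BetaStar t v) :
    ∃ w, BetaStar u w ∧ BetaStar v w := by
  rcases h1.toParStar.confluent (BetaStar.toParStar h2) with ⟨w, hw1, hw2⟩
  exact ⟨w, hw1.toBetaStar, hw2.toBetaStar⟩

/-- Church–Rosser: β-equivalent terms have a common reduct. -/
theorem BetaEq.join {t u : Lam} (h : BetaEq t u) :
    ∃ v, BetaStar t v ∧ BetaStar u v := by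
  induction h with
  | rel a b hab => exact ⟨b, Relation.ReflTransGen.single hab, Relation.ReflTransGen.refl⟩
  | refl a => exact ⟨a, Relation.ReflTransGen.refl, Relation.ReflTransGen.refl⟩
  | symm a b _ ih => rcases ih with ⟨v, h1, h2⟩; exact ⟨v, h2, h1⟩
  | trans a b c _ _ ih1 ih2 =>
    rcases ih1 with ⟨v1, ha1, hb1⟩
    rcases ih2 with ⟨v2, hb2, hc2⟩
    rcases hb1.confluent hb2 with ⟨w, hw1, hw2⟩
    exact ⟨w, ha1.trans hw1, hc2.trans hw2⟩

end Lam
/-! ### Section D: standardization (Kashima) and head-spine extraction -/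

namespace Lam

inductive St : Lam → Lam → Prop
  | var {M : Lam} {x : ℕ} : WhrStar M (var x) → St M (var x)
  | app {M a b a' b' : Lam} : WhrStar M (app a b) → St a a' → St b b' → St M (app a' b')
  | lam {M a a' : Lam} : WhrStar M (lam a) → St a a' → St M (lam a')

theorem stRefl (M : Lam) : St M M := by
  induction M with
  | var n => exact St.var Relation.ReflTransGen.refl
  | app a b iha ihb => exact St.app Relation.ReflTransGen.refl iha ihb
  | lam a ih => exact St.lam Relation.ReflTransGen.refl ih

theorem stWhr {M N P : Lam} (h : WhrStar M N) (h2 : St N P) : St M P := by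
  cases h2 with
  | var h' => exact St.var (h.trans h')
  | app h' s1 s2 => exact St.app (h.trans h') s1 s2
  | lam h' s1 => exact St.lam (h.trans h') s1

theorem whrRen {a b : Lam} (h : Whr a b) (ρ : ℕ → ℕ) : Whr (ren ρ a) (ren ρ b) := by
  rw [ren_eq_msub, ren_eq_msub]
  exact h.msub _

theorem whrStarRen {a b : Lam} (h : WhrStar a b) (ρ : ℕ → ℕ) :
    WhrStar (ren ρ a) (ren ρ b) := by
  induction h with
  | refl => exact Relation.ReflTransGen.refl
  | tail _ h2 ih => exact ih.tail (whrRen h2 ρ)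

theorem stRen {M N : Lam} (h : St M N) : ∀ ρ, St (ren ρ M) (ren ρ N) := by
  induction h with
  | var h' => intro ρ; exact St.var (whrStarRen h' ρ)
  | app h' _ _ ih1 ih2 => intro ρ; exact St.app (whrStarRen h' ρ) (ih1 ρ) (ih2 ρ)
  | lam h' _ ih =>
    intro ρ
    exact St.lam (whrStarRen h' ρ) (ih (upr ρ))

theorem stMsub {M N : Lam} (h : St M N) : ∀ {σ σ' : ℕ → Lam},
    (∀ n, St (σ n) (σ' n)) → St (msub σ M) (msub σ' N) := by
  induction h with
  | @var M x h' =>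
    intro σ σ' hσ
    have : WhrStar (msub σ M) (σ x) := h'.msub σ
    exact stWhr this (hσ x)
  | app h' _ _ ih1 ih2 =>
    intro σ σ' hσ
    exact St.app (h'.msub σ) (ih1 hσ) (ih2 hσ)
  | lam h' _ ih =>
    intro σ σ' hσ
    refine St.lam (h'.msub σ) (ih ?_)
    intro n
    cases n with
    | zero => exact stRefl _
    | succ n => exact stRen (hσ n) Nat.succ

theorem stSubst0 {M M' N N' : Lam} (h1 : St M M') (h2 : St N N') :
    St (subst M 0 N) (subst M' 0 N') := by
  rw [subst_eq_msub, subst_eq_msub]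
  refine stMsub h1 ?_
  intro n
  cases n with
  | zero =>
    have e : ∀ v : Lam, sub1 0 v 0 = v := fun v => by simp [sub1]
    rw [e, e]; exact h2
  | succ n =>
    have e : ∀ v : Lam, sub1 0 v (n+1) = var n := fun v => by simp [sub1]
    rw [e, e]; exact stRefl _

theorem stBeta {N N' : Lam} (h : Beta N N') : ∀ {M}, St M N → St M N' := by
  induction h with
  | beta t u =>
    intro M hst
    cases hst with
    | app h' s1 s2 =>
      cases s1 with
      | lam h'' s1' =>
        have hw : WhrStar M (app (Lam.lam _) _) := h'.trans ((WhrStar.appL _ h''))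
        have hw2 : WhrStar M (subst _ 0 _) := hw.tail (Whr.head _ _)
        exact stWhr hw2 (stSubst0 s1' s2)
  | appL u _ ih =>
    intro M hst
    cases hst with
    | app h' s1 s2 => exact St.app h' (ih s1) s2
  | appR t _ ih =>
    intro M hst
    cases hst with
    | app h' s1 s2 => exact St.app h' s1 (ih s2)
  | lam _ ih =>
    intro M hst
    cases hst with
    | lam h' s1 => exact St.lam h' (ih s1)

theorem stOfBetaStar {M N : Lam} (h : BetaStar M N) : St M N := by
  induction h with
  | refl => exact stRefl M
  | tail _ h2 ih => exact stBeta h2 ih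

theorem stToBetaStar {M N : Lam} (h : St M N) : BetaStar M N := by
  induction h with
  | var h' => exact h'.toBetaStar
  | app h' _ _ ih1 ih2 => exact h'.toBetaStar.trans (BetaStar.appCong ih1 ih2)
  | lam h' _ ih => exact h'.toBetaStar.trans (BetaStar.lamCong ih)

/-! spines -/

theorem appList_cons (t u : Lam) (l : List Lam) :
    appList t (u :: l) = appList (app t u) l := rfl

theorem appList_snoc (t u : Lam) (l : List Lam) :
    appList t (l ++ [u]) = app (appList t l) u := by
  simp [appList, List.foldl_append]

theorem whrStarAppList {t t' : Lam} (h : WhrStar t t') (l : List Lam) :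
    WhrStar (appList t l) (appList t' l) := by
  induction l generalizing t t' with
  | nil => exact h
  | cons u l ih =>
    rw [appList_cons, appList_cons]
    exact ih (WhrStar.appL u h)

theorem msub_appList (σ : ℕ → Lam) (t : Lam) (l : List Lam) :
    msub σ (appList t l) = appList (msub σ t) (l.map (msub σ)) := by
  induction l generalizing t with
  | nil => rfl
  | cons u l ih =>
    rw [appList_cons, List.map_cons, appList_cons, ih]
    rfl

theorem appList_shape (t : Lam) (l : List Lam)
    (h : (∃ y, t = var y) ∨ (∃ a b, t = app a b)) :
    (∃ y, appList t l = var y) ∨ (∃ a b, appList t l = app a b) := by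
  induction l generalizing t with
  | nil => exact h
  | cons u l ih =>
    rw [appList_cons]
    exact ih _ (Or.inr ⟨t, u, rfl⟩)

theorem appList_var_ne_lam (x : ℕ) (l : List Lam) (s : Lam) :
    appList (var x) l ≠ lam s := by
  intro he
  rcases appList_shape (var x) l (Or.inl ⟨x, rfl⟩) with ⟨y, hy⟩ | ⟨a, b, hab⟩
  · rw [hy] at he; cases he
  · rw [hab] at he; cases he

theorem forall₂_append' {α β : Type _} {R : α → β → Prop} {l1 l2 : List α} {r1 r2 : List β}
    (h1 : List.Forall₂ R l1 r1) (h2 : List.Forall₂ R l2 r2) :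
    List.Forall₂ R (l1 ++ l2) (r1 ++ r2) := by
  induction h1 with
  | nil => exact h2
  | cons h hs ih => exact List.Forall₂.cons h ih

theorem forall₂_betaStar_refl (l : List Lam) : List.Forall₂ BetaStar l l := by
  induction l with
  | nil => exact List.Forall₂.nil
  | cons a l ih => exact List.Forall₂.cons Relation.ReflTransGen.refl ih

theorem betaSpine {x : ℕ} {ps : List Lam} {v : Lam}
    (h : Beta (appList (var x) ps) v) :
    ∃ qs, v = appList (var x) qs ∧ List.Forall₂ BetaStar ps qs := by
  induction ps using List.reverseRecOn generalizing v with
  | nil => cases h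
  | append_singleton l u ih =>
    rw [appList_snoc] at h
    rcases appList_shape (var x) l (Or.inl ⟨x, rfl⟩) with ⟨y, hy⟩ | ⟨a, b, hab⟩
    · rw [hy] at h
      cases h with
      | appL u h' => cases h'
      | @appR _ _ u' h' =>
        refine ⟨l ++ [u'], ?_, ?_⟩
        · rw [appList_snoc, hy]
        · exact forall₂_append' (forall₂_betaStar_refl l)
            (List.Forall₂.cons (Relation.ReflTransGen.single h') List.Forall₂.nil)
    · rw [hab] at h
      cases h with
      | appL u h' =>
        rw [← hab] at h'
        rcases ih h' with ⟨qs, rfl, hqs⟩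
        refine ⟨qs ++ [u], (appList_snoc _ _ _).symm, ?_⟩
        exact forall₂_append' hqs
          (List.Forall₂.cons Relation.ReflTransGen.refl List.Forall₂.nil)
      | @appR _ _ u' h' =>
        refine ⟨l ++ [u'], ?_, ?_⟩
        · rw [appList_snoc, hab]
        · exact forall₂_append' (forall₂_betaStar_refl l)
            (List.Forall₂.cons (Relation.ReflTransGen.single h') List.Forall₂.nil)

theorem forall₂_betaStar_trans {l1 l2 l3 : List Lam}
    (h1 : List.Forall₂ BetaStar l1 l2) (h2 : List.Forall₂ BetaStar l2 l3) :
    List.Forall₂ BetaStar l1 l3 := by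
  induction h1 generalizing l3 with
  | nil => cases h2; exact List.Forall₂.nil
  | cons h hs ih =>
    cases h2 with
    | cons h' hs' => exact List.Forall₂.cons (h.trans h') (ih hs')

theorem betaStarSpine {x : ℕ} {ps : List Lam} {v : Lam}
    (h : BetaStar (appList (var x) ps) v) :
    ∃ qs, v = appList (var x) qs ∧ List.Forall₂ BetaStar ps qs := by
  induction h with
  | refl => exact ⟨ps, rfl, forall₂_betaStar_refl ps⟩
  | tail _ h2 ih =>
    rcases ih with ⟨qs, rfl, hqs⟩
    rcases betaSpine h2 with ⟨rs, rfl, hrs⟩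
    exact ⟨rs, rfl, forall₂_betaStar_trans hqs hrs⟩

theorem stSpineInv {x : ℕ} {qs : List Lam} {M : Lam}
    (h : St M (appList (var x) qs)) :
    ∃ ss, WhrStar M (appList (var x) ss) ∧ List.Forall₂ St ss qs := by
  induction qs using List.reverseRecOn generalizing M with
  | nil =>
    cases h with
    | var h' => exact ⟨[], h', List.Forall₂.nil⟩
  | append_singleton l q ih =>
    rw [appList_snoc] at h
    cases h with
    | @app M a b a' b' h' s1 s2 =>
      rcases ih s1 with ⟨ss, hss, hf⟩
      refine ⟨ss ++ [b], ?_, ?_⟩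
      · rw [appList_snoc]
        exact h'.trans (WhrStar.appL b hss)
      · exact forall₂_append' hf (List.Forall₂.cons s2 List.Forall₂.nil)

theorem forall₂_compose {ss qs ps : List Lam} (h1 : List.Forall₂ St ss qs)
    (h2 : List.Forall₂ BetaStar ps qs) : List.Forall₂ BetaEq ss ps := by
  induction h1 generalizing ps with
  | nil => cases h2; exact List.Forall₂.nil
  | cons h hs ih =>
    cases h2 with
    | cons h' hs' =>
      exact List.Forall₂.cons
        (((stToBetaStar h).toBetaEq).trans _ _ _ h'.toBetaEq.symm) (ih hs')

/-- The key extraction lemma: a term β-equivalent to a variable-headed spine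
weak-head-reduces to a variable-headed spine with β-equivalent arguments. -/
theorem extract {t : Lam} {x : ℕ} {ps : List Lam}
    (h : BetaEq t (appList (var x) ps)) :
    ∃ ss, WhrStar t (appList (var x) ss) ∧ List.Forall₂ BetaEq ss ps := by
  rcases h.join with ⟨v, hv1, hv2⟩
  rcases betaStarSpine hv2 with ⟨qs, rfl, hqs⟩
  rcases stSpineInv (stOfBetaStar hv1) with ⟨ss, hss, hf⟩
  exact ⟨ss, hss, forall₂_compose hf hqs⟩

end Lam
/-! ### Section E: type-level infrastructure -/

namespace Ty

theorem mem_fv_all {A : Ty} {x : ℕ} : x ∈ fv (all A) ↔ x + 1 ∈ fv A := by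
  simp only [fv, Finset.mem_image, Finset.mem_erase]
  constructor
  · rintro ⟨y, ⟨hy0, hyt⟩, rfl⟩
    have : y - 1 + 1 = y := by omega
    rwa [this]
  · intro h
    exact ⟨x+1, ⟨by omega, h⟩, by omega⟩

def size : Ty → ℕ
  | var _ => 1
  | arr A B => size A + size B + 1
  | all A => size A + 1

theorem size_subst_var : ∀ (A : Ty) (k Y : ℕ), size (Ty.subst A k (Ty.var Y)) = size A := by
  intro A
  induction A with
  | var n =>
    intro k Y
    by_cases h : n = k
    · simp [Ty.subst, h, size]
    · by_cases h2 : k < n <;> simp [Ty.subst, h, h2, size]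
  | arr A B ihA ihB => intro k Y; simp [Ty.subst, size, ihA, ihB]
  | all A ih =>
    intro k Y
    simp only [Ty.subst, size, Ty.lift]
    rw [if_neg (by omega : ¬ Y < 0), ih]

theorem fv_subst_lt {A : Ty} {m k Y : ℕ} (h : m ∈ A.fv) (hm : m < k) :
    m ∈ (Ty.subst A k (Ty.var Y)).fv := by
  induction A generalizing m k Y with
  | var n =>
    simp only [fv, Finset.mem_singleton] at h
    subst h
    have h1 : ¬ m = k := by omega
    have h2 : ¬ k < m := by omega
    simp [Ty.subst, h1, h2, fv]
  | arr A B ihA ihB =>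
    simp only [fv, Ty.subst, Finset.mem_union] at h ⊢
    rcases h with h | h
    · exact Or.inl (ihA h hm)
    · exact Or.inr (ihB h hm)
  | all A ih =>
    rw [mem_fv_all] at h
    show m ∈ (all (Ty.subst A (k+1) (Ty.lift 0 (Ty.var Y)))).fv
    rw [mem_fv_all]
    have : Ty.lift 0 (Ty.var Y) = Ty.var (Y+1) := by simp [Ty.lift]
    rw [this]
    exact ih h (by omega)

/-- encoding of types into natural numbers -/
def code : Ty → ℕ
  | var n => 3 * n
  | arr A B => 3 * Nat.pair (code A) (code B) + 1
  | all A => 3 * code A + 2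

theorem code_inj : ∀ {A B : Ty}, code A = code B → A = B := by
  intro A
  induction A with
  | var n =>
    intro B h
    cases B with
    | var m =>
      simp only [code] at h
      have : n = m := by omega
      rw [this]
    | arr C D => exfalso; simp only [code] at h; omega
    | all C => exfalso; simp only [code] at h; omega
  | arr C D ihC ihD =>
    intro B h
    cases B with
    | var m => exfalso; simp only [code] at h; omega
    | arr C' D' =>
      simp only [code] at h
      have hp : Nat.pair (code C) (code D) = Nat.pair (code C') (code D') := by omega
      rw [Nat.pair_eq_pair] at hp
      rw [ihC hp.1, ihD hp.2]
    | all C' => exfalso; simp only [code] at h; omega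
  | all C ihC =>
    intro B h
    cases B with
    | var m => exfalso; simp only [code] at h; omega
    | arr C' D' => exfalso; simp only [code] at h; omega
    | all C' =>
      simp only [code] at h
      have : code C = code C' := by omega
      rw [ihC this]

theorem fv_le_code {B : Ty} {n : ℕ} (h : n ∈ B.fv) : n ≤ code B := by
  induction B generalizing n with
  | var m =>
    simp only [fv, Finset.mem_singleton] at h
    subst h
    show n ≤ 3 * n
    omega
  | arr C D ihC ihD =>
    simp only [fv, Finset.mem_union] at h
    rcases h with h | h
    · calc n ≤ code C := ihC h
        _ ≤ Nat.pair (code C) (code D) := Nat.left_le_pair _ _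
        _ ≤ code (arr C D) := by simp [code]; omega
    · calc n ≤ code D := ihD h
        _ ≤ Nat.pair (code C) (code D) := Nat.right_le_pair _ _
        _ ≤ code (arr C D) := by simp [code]; omega
  | all C ihC =>
    rw [mem_fv_all] at h
    have := ihC h
    simp only [code]
    omega

/-- spine decomposition of (negative) types -/
def negArgs : Ty → List Ty
  | arr P B => P :: negArgs B
  | _ => []

def negHead : Ty → ℕ
  | arr _ B => negHead B
  | var m => m
  | all _ => 0

end Ty

/-- substituting a variable into a variable yields a variable -/
theorem subst_var_shape (n k Y : ℕ) : ∃ m, Ty.subst (Ty.var n) k (Ty.var Y) = Ty.var m := by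
  by_cases h1 : n = k
  · exact ⟨Y, by simp [Ty.subst, h1]⟩
  · by_cases h2 : k < n
    · exact ⟨n-1, by simp [Ty.subst, h1, h2]⟩
    · exact ⟨n, by simp [Ty.subst, h1, h2]⟩

theorem pos_neg_subst_var : ∀ (s : ℕ) (A : Ty), Ty.size A ≤ s →
    (PosTy A → ∀ k Y, PosTy (Ty.subst A k (Ty.var Y))) ∧
    (NegTy A → ∀ k Y, NegTy (Ty.subst A k (Ty.var Y))) := by
  intro s
  induction s with
  | zero =>
    intro A hA
    exfalso
    cases A <;> simp [Ty.size] at hA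
  | succ s ih =>
    intro A hA
    constructor
    · intro hp k Y
      cases hp with
      | var n =>
        rcases subst_var_shape n k Y with ⟨m, hm⟩
        rw [hm]; exact PosTy.var m
      | @arr B A' hB hA' =>
        have sB : Ty.size B ≤ s := by simp [Ty.size] at hA; omega
        have sA : Ty.size A' ≤ s := by simp [Ty.size] at hA; omega
        exact PosTy.arr ((ih B sB).2 hB k Y) ((ih A' sA).1 hA' k Y)
      | @all A' hA' hfv =>
        have sA : Ty.size A' ≤ s := by simp [Ty.size] at hA; omega
        show PosTy (Ty.all (Ty.subst A' (k+1) (Ty.lift 0 (Ty.var Y))))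
        have e : Ty.lift 0 (Ty.var Y) = Ty.var (Y+1) := by simp [Ty.lift]
        rw [e]
        exact PosTy.all ((ih A' sA).1 hA' (k+1) (Y+1))
          (Ty.fv_subst_lt hfv (by omega))
    · intro hn k Y
      cases hn with
      | var n =>
        rcases subst_var_shape n k Y with ⟨m, hm⟩
        rw [hm]; exact NegTy.var m
      | @arr B A' hB hA' =>
        have sB : Ty.size B ≤ s := by simp [Ty.size] at hA; omega
        have sA : Ty.size A' ≤ s := by simp [Ty.size] at hA; omega
        exact NegTy.arr ((ih B sB).1 hB k Y) ((ih A' sA).2 hA' k Y)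

theorem posTy_subst_var {A : Ty} (h : PosTy A) (k Y : ℕ) :
    PosTy (Ty.subst A k (Ty.var Y)) :=
  (pos_neg_subst_var (Ty.size A) A le_rfl).1 h k Y
/-! ### Section F: lemmas about the interpretation -/

theorem interp_sat : ∀ (A : Ty) (I : Interp), (∀ n, Saturated (I n)) →
    Saturated (interpC Saturated A I) := by
  intro A
  induction A with
  | var n => intro I hI; exact hI n
  | arr B C ihB ihC =>
    intro I hI t u htu hu
    intro v hv
    exact ihC I hI _ _ (Lam.WhrStar.appL v htu) (hu v hv)
  | all A ih =>
    intro I hI t u htu hu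
    simp only [interpC, Set.mem_iInter] at hu ⊢
    intro G hG
    refine ih (Interp.cons G I) ?_ _ _ htu (hu G hG)
    intro n
    cases n with
    | zero => exact hG
    | succ n => exact hI n

def Interp.insertAt (k : ℕ) (G : Set Lam) (I : Interp) : Interp :=
  fun n => if n < k then I n else if n = k then G else I (n-1)

theorem insertAt_zero (G : Set Lam) (I : Interp) :
    Interp.insertAt 0 G I = Interp.cons G I := by
  funext n
  cases n with
  | zero => simp [Interp.insertAt, Interp.cons]
  | succ n => simp [Interp.insertAt, Interp.cons]

theorem insertAt_succ_cons (k : ℕ) (G H : Set Lam) (I : Interp) :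
    Interp.cons H (Interp.insertAt k G I) = Interp.insertAt (k+1) G (Interp.cons H I) := by
  funext n
  cases n with
  | zero => simp [Interp.insertAt, Interp.cons]
  | succ n =>
    show Interp.insertAt k G I n = _
    simp only [Interp.insertAt, Interp.cons]
    by_cases h1 : n < k
    · rw [if_pos h1, if_pos (by omega : n+1 < k+1)]
    · rw [if_neg h1, if_neg (by omega : ¬ (n+1 < k+1))]
      by_cases h2 : n = k
      · rw [if_pos h2, if_pos (by omega : n+1 = k+1)]
      · rw [if_neg h2, if_neg (by omega : ¬ (n+1 = k+1))]
        have hn : n ≠ 0 ∨ n = 0 := by omega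
        have hk : k < n := by omega
        show I (n-1) = Interp.cons H I (n+1-1)
        have : n + 1 - 1 = n := by omega
        rw [this]
        show I (n-1) = Interp.cons H I n
        cases n with
        | zero => omega
        | succ m => rfl

theorem interp_congr : ∀ (A : Ty) (I J : Interp), (∀ n ∈ A.fv, I n = J n) →
    interpC Saturated A I = interpC Saturated A J := by
  intro A
  induction A with
  | var n => intro I J h; exact h n (by simp [Ty.fv])
  | arr B C ihB ihC =>
    intro I J h
    show arrowSet _ _ = arrowSet _ _
    rw [ihB I J (fun n hn => h n (by simp [Ty.fv, hn])),
        ihC I J (fun n hn => h n (by simp [Ty.fv, hn]))]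
  | all A ih =>
    intro I J h
    show (⋂ (G) (_ : Saturated G), interpC Saturated A (Interp.cons G I)) = _
    refine Set.iInter_congr (fun G => Set.iInter_congr (fun hG => ?_))
    refine ih _ _ (fun n hn => ?_)
    cases n with
    | zero => rfl
    | succ n =>
      show I n = J n
      exact h n (Ty.mem_fv_all.2 hn)

theorem interp_lift : ∀ (A : Ty) (d : ℕ) (G : Set Lam) (I : Interp),
    interpC Saturated (Ty.lift d A) (Interp.insertAt d G I) = interpC Saturated A I := by
  intro A
  induction A with
  | var n =>
    intro d G I
    by_cases h : n < d
    · simp only [Ty.lift, if_pos h]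
      show Interp.insertAt d G I n = I n
      simp [Interp.insertAt, h]
    · simp only [Ty.lift, if_neg h]
      show Interp.insertAt d G I (n+1) = I n
      have h1 : ¬ (n+1 < d) := by omega
      have h2 : ¬ (n+1 = d) := by omega
      simp [Interp.insertAt, h1, h2]
  | arr B C ihB ihC =>
    intro d G I
    show arrowSet _ _ = arrowSet _ _
    rw [ihB, ihC]
  | all A ih =>
    intro d G I
    show (⋂ (H) (_ : Saturated H), interpC Saturated (Ty.lift (d+1) A)
      (Interp.cons H (Interp.insertAt d G I))) = _
    refine Set.iInter_congr (fun H => Set.iInter_congr (fun hH => ?_))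
    rw [insertAt_succ_cons, ih]

theorem interp_subst : ∀ (A : Ty) (k : ℕ) (C : Ty) (I : Interp),
    interpC Saturated (Ty.subst A k C) I
      = interpC Saturated A (Interp.insertAt k (interpC Saturated C I) I) := by
  intro A
  induction A with
  | var n =>
    intro k C I
    by_cases h1 : n = k
    · simp only [Ty.subst, if_pos h1]
      show _ = Interp.insertAt k _ I n
      simp [Interp.insertAt, h1]
    · by_cases h2 : k < n
      · simp only [Ty.subst, if_neg h1, if_pos h2]
        show I (n-1) = Interp.insertAt k _ I n
        have h3 : ¬ (n < k) := by omega
        simp [Interp.insertAt, h1, h3]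
      · simp only [Ty.subst, if_neg h1, if_neg h2]
        show I n = Interp.insertAt k _ I n
        have h3 : n < k := by omega
        simp [Interp.insertAt, h3]
  | arr B C' ihB ihC' =>
    intro k C I
    show arrowSet _ _ = arrowSet _ _
    rw [ihB, ihC']
  | all A ih =>
    intro k C I
    show (⋂ (H) (_ : Saturated H), interpC Saturated (Ty.subst A (k+1) (Ty.lift 0 C))
      (Interp.cons H I)) = ⋂ (H) (_ : Saturated H), _
    refine Set.iInter_congr (fun H => Set.iInter_congr (fun hH => ?_))
    rw [ih]
    have e : interpC Saturated (Ty.lift 0 C) (Interp.cons H I) = interpC Saturated C I := by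
      rw [← insertAt_zero H I, interp_lift]
    rw [e, insertAt_succ_cons]

/-- applying a member of a negative type to members of the interpretations of its
argument types lands in the head slot -/
theorem negSpine : ∀ (B : Ty), NegTy B → ∀ (I : Interp) (v : Lam),
    v ∈ interpC Saturated B I →
    ∀ (ps : List Lam),
      List.Forall₂ (fun P p => p ∈ interpC Saturated P I) (Ty.negArgs B) ps →
      Lam.appList v ps ∈ I (Ty.negHead B) := by
  intro B
  induction B with
  | var m =>
    intro _ I v hv ps hps
    have : Ty.negArgs (Ty.var m) = [] := rfl
    rw [this] at hps
    cases hps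
    exact hv
  | arr P B' ihP ihB' =>
    intro hB I v hv ps hps
    cases hB with
    | arr hP hB' =>
      have : Ty.negArgs (Ty.arr P B') = P :: Ty.negArgs B' := rfl
      rw [this] at hps
      cases hps with
      | cons hp hps' =>
        show Lam.appList v (_ :: _) ∈ _
        rw [Lam.appList_cons]
        exact ihB' hB' I _ (hv _ hp) _ hps'
  | all A ih =>
    intro hB
    exact absurd hB (by intro h; cases h)
/-! ### Section G: syntactic model, completeness and adequacy -/

def xvar (N₀ : ℕ) (B : Ty) (i : ℕ) : ℕ := N₀ + Nat.pair (Ty.code B) i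

theorem xvar_inj {N₀ : ℕ} {B B' : Ty} {i i' : ℕ}
    (h : xvar N₀ B i = xvar N₀ B' i') : B = B' ∧ i = i' := by
  unfold xvar at h
  have h2 : Nat.pair (Ty.code B) i = Nat.pair (Ty.code B') i' := by omega
  rw [Nat.pair_eq_pair] at h2
  exact ⟨Ty.code_inj h2.1, h2.2⟩

theorem le_xvar_right (N₀ : ℕ) (B : Ty) (i : ℕ) : i ≤ xvar N₀ B i :=
  le_trans (Nat.right_le_pair _ _) (Nat.le_add_left _ _)

theorem N0_le_xvar (N₀ : ℕ) (B : Ty) (i : ℕ) : N₀ ≤ xvar N₀ B i := Nat.le_add_right _ _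

theorem tyfv_le_xvar {N₀ : ℕ} {B : Ty} {i m : ℕ} (h : m ∈ B.fv) : m ≤ xvar N₀ B i :=
  le_trans (Ty.fv_le_code h) (le_trans (Nat.left_le_pair _ _) (Nat.le_add_left _ _))

/-- The syntactic (Böhm-approximation) predicate: `Phi N₀ A t` says that `t`
hereditarily behaves, up to weak head reduction, as a canonical inhabitant of
the positive type `A`, relative to the reserved variables `xvar N₀ _ _`. -/
inductive Phi (N₀ : ℕ) : Ty → Lam → Prop
  | gen {B : Ty} {i : ℕ} {w : Lam} {ps : List Lam} :
      NegTy B →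
      Lam.WhrStar w (Lam.appList (Lam.var (xvar N₀ B i)) ps) →
      ps.length = (Ty.negArgs B).length →
      (∀ k (h1 : k < ps.length) (h2 : k < (Ty.negArgs B).length),
        Phi N₀ ((Ty.negArgs B).get ⟨k, h2⟩) (ps.get ⟨k, h1⟩)) →
      Phi N₀ (Ty.var (Ty.negHead B)) w
  | arr {B A' : Ty} {t : Lam} :
      (∀ j, Phi N₀ A' (Lam.app t (Lam.var (xvar N₀ B j)))) →
      Phi N₀ (Ty.arr B A') t
  | all {A : Ty} {t : Lam} :
      (∀ Y, Phi N₀ (Ty.subst A 0 (Ty.var Y)) t) →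
      Phi N₀ (Ty.all A) t

/-- the syntactic interpretation -/
def IV (N₀ : ℕ) : Interp := fun n => {w | Phi N₀ (Ty.var n) w}

theorem IV_sat (N₀ : ℕ) : ∀ n, Saturated (IV N₀ n) := by
  intro n t u htu hu
  cases hu with
  | gen hB hw hlen hks => exact Phi.gen hB (htu.trans hw) hlen hks

theorem mem_fv_appList_of_head {x : ℕ} {t : Lam} (h : x ∈ t.fv) :
    ∀ l, x ∈ (Lam.appList t l).fv := by
  intro l
  induction l generalizing t with
  | nil => exact h
  | cons u l ih =>
    rw [Lam.appList_cons]
    exact ih (show x ∈ t.fv ∪ u.fv from Finset.mem_union.2 (Or.inl h))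

theorem mem_fv_appList_of_arg {y : ℕ} {u : Lam} (hyu : y ∈ u.fv) :
    ∀ (t : Lam) (l : List Lam), u ∈ l → y ∈ (Lam.appList t l).fv := by
  intro t l
  induction l generalizing t with
  | nil => intro h; cases h
  | cons a l ih =>
    intro h
    rw [Lam.appList_cons]
    rcases List.mem_cons.1 h with rfl | h'
    · exact mem_fv_appList_of_head (show y ∈ t.fv ∪ u.fv from Finset.mem_union.2 (Or.inr hyu)) l
    · exact ih _ h'

theorem exists_fresh_j (N₀ : ℕ) (B : Ty) (t : Lam) : ∃ j, xvar N₀ B j ∉ t.fv := by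
  refine ⟨t.fv.sup id + 1, fun hmem => ?_⟩
  have h1 : id (xvar N₀ B (t.fv.sup id + 1)) ≤ t.fv.sup id := Finset.le_sup hmem
  have h2 := le_xvar_right N₀ B (t.fv.sup id + 1)
  simp only [id] at h1
  omega

/-- Completeness for the syntactic model, mutually with the fact that the
reserved variables realize their (negative) types. -/
theorem alphaF (N₀ : ℕ) : ∀ s : ℕ,
    (∀ A, Ty.size A ≤ s → PosTy A → ∀ t, t ∈ interpC Saturated A (IV N₀) → Phi N₀ A t) ∧
    (∀ B, Ty.size B ≤ s → NegTy B →
      ∀ (B₀ : Ty) (i : ℕ) (pre : List Ty) (qs : List Lam),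
        NegTy B₀ → Ty.negArgs B₀ = pre ++ Ty.negArgs B → Ty.negHead B₀ = Ty.negHead B →
        List.Forall₂ (fun P p => Phi N₀ P p) pre qs →
        Lam.appList (Lam.var (xvar N₀ B₀ i)) qs ∈ interpC Saturated B (IV N₀)) := by
  intro s
  induction s with
  | zero =>
    constructor
    · intro A hA
      exfalso; cases A <;> simp [Ty.size] at hA
    · intro B hB
      exfalso; cases B <;> simp [Ty.size] at hB
  | succ s ih =>
    constructor
    · intro A hA hpos t ht
      cases hpos with
      | var n => exact ht
      | @arr B A' hB hA' =>
        have sB : Ty.size B ≤ s := by simp [Ty.size] at hA; omega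
        have sA : Ty.size A' ≤ s := by simp [Ty.size] at hA; omega
        refine Phi.arr (fun j => ?_)
        refine (ih.1 A' sA hA') _ ?_
        refine ht _ ?_
        have := ih.2 B sB hB B j [] [] hB (by simp) rfl List.Forall₂.nil
        exact this
      | @all A' hA' hfv =>
        have sA : Ty.size A' ≤ s := by simp [Ty.size] at hA; omega
        refine Phi.all (fun Y => ?_)
        refine (ih.1 (Ty.subst A' 0 (Ty.var Y)) (by rw [Ty.size_subst_var]; exact sA)
          (posTy_subst_var hA' 0 Y)) _ ?_
        rw [interp_subst]
        have e : interpC Saturated (Ty.var Y) (IV N₀) = IV N₀ Y := rfl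
        rw [e, insertAt_zero]
        have hmem : t ∈ ⋂ (G) (_ : Saturated G),
            interpC Saturated A' (Interp.cons G (IV N₀)) := ht
        exact Set.mem_iInter.1 (Set.mem_iInter.1 hmem (IV N₀ Y)) (IV_sat N₀ Y)
    · intro B hB hneg B₀ i pre qs hB₀ hargs hhead hf
      cases hneg with
      | var m =>
        show Lam.appList (Lam.var (xvar N₀ B₀ i)) qs ∈ IV N₀ m
        have hargs' : Ty.negArgs B₀ = pre := by simpa [Ty.negArgs] using hargs
        have hhead' : Ty.negHead B₀ = m := by simpa [Ty.negHead] using hhead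
        rcases List.forall₂_iff_get.1 hf with ⟨hlen, hget⟩
        subst hargs'
        rw [← hhead']
        exact Phi.gen hB₀ Relation.ReflTransGen.refl hlen.symm
          (fun k h1 h2 => hget k h2 h1)
      | @arr P B' hP hB' =>
        have sP : Ty.size P ≤ s := by simp [Ty.size] at hB; omega
        have sB' : Ty.size B' ≤ s := by simp [Ty.size] at hB; omega
        intro p hp
        have hphi : Phi N₀ P p := ih.1 P sP hP p hp
        have goal := ih.2 B' sB' hB' B₀ i (pre ++ [P]) (qs ++ [p]) hB₀
          (by rw [hargs]; simp [Ty.negArgs]) (by rw [hhead]; rfl)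
          (Lam.forall₂_append' hf (List.Forall₂.cons hphi List.Forall₂.nil))
        rwa [Lam.appList_snoc] at goal

/-- coverage of the reserved free variables of `t` by the substitution -/
def Cov (N₀ : ℕ) (σ : ℕ → Lam) (I : Interp) (t : Lam) : Prop :=
  ∀ B i, xvar N₀ B i ∈ t.fv → σ (xvar N₀ B i) ∈ interpC Saturated B I

/-- Adequacy: any β-equivalence class member of a `Phi`-approximated term
realizes the type in every saturated interpretation. -/
theorem betaAdq (N₀ : ℕ) {A : Ty} {t₀ : Lam} (h : Phi N₀ A t₀) :
    ∀ t, Lam.BetaEq t t₀ → ∀ (I : Interp) (σ : ℕ → Lam),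
      (∀ n, Saturated (I n)) → Cov N₀ σ I t →
      Lam.msub σ t ∈ interpC Saturated A I := by
  induction h with
  | @gen B i w ps hB hw hlen hks ih =>
    intro t heq I σ hI hcov
    have heq2 : Lam.BetaEq t (Lam.appList (Lam.var (xvar N₀ B i)) ps) :=
      heq.trans _ _ _ (hw.toBetaStar.toBetaEq)
    rcases Lam.extract heq2 with ⟨ss, hss, hf⟩
    have hlen2 : ss.length = ps.length := hf.length_eq
    have hx : xvar N₀ B i ∈ t.fv := by
      refine hss.toBetaStar.fv_subset ?_
      exact mem_fv_appList_of_head (by simp [Lam.fv]) ss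
    have hσx : σ (xvar N₀ B i) ∈ interpC Saturated B I := hcov B i hx
    have hred : Lam.WhrStar (Lam.msub σ t)
        (Lam.appList (σ (xvar N₀ B i)) (ss.map (Lam.msub σ))) := by
      have h2 := hss.msub σ
      rwa [Lam.msub_appList] at h2
    have hargs : List.Forall₂ (fun P p => p ∈ interpC Saturated P I)
        (Ty.negArgs B) (ss.map (Lam.msub σ)) := by
      refine List.forall₂_of_length_eq_of_get ?_ ?_
      · simp [hlen2, ← hlen]
      · intro k h1 h2
        have hk1 : k < ss.length := by simpa using h2
        have hk2 : k < ps.length := by omega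
        have hgetmap : (ss.map (Lam.msub σ)).get ⟨k, h2⟩
            = Lam.msub σ (ss.get ⟨k, hk1⟩) := by simp
        rw [hgetmap]
        refine ih k hk2 h1 (ss.get ⟨k, hk1⟩) (hf.get hk1 hk2) I σ hI ?_
        intro B' i' hmem
        refine hcov B' i' ?_
        refine hss.toBetaStar.fv_subset ?_
        exact mem_fv_appList_of_arg hmem _ _ (ss.get_mem _)
    have hland : Lam.appList (σ (xvar N₀ B i)) (ss.map (Lam.msub σ))
        ∈ I (Ty.negHead B) := negSpine B hB I _ hσx _ hargs
    exact hI (Ty.negHead B) _ _ hred hland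
  | @arr B A' t₀' hphi ih =>
    intro t heq I σ hI hcov
    intro v hv
    obtain ⟨j, hj⟩ := exists_fresh_j N₀ B t
    have happ : Lam.BetaEq (Lam.app t (Lam.var (xvar N₀ B j)))
        (Lam.app t₀' (Lam.var (xvar N₀ B j))) :=
      heq.appCong (Relation.EqvGen.refl _)
    have hres := ih j _ happ I (Function.update σ (xvar N₀ B j) v) hI ?_
    · have e1 : Lam.msub (Function.update σ (xvar N₀ B j) v)
          (Lam.app t (Lam.var (xvar N₀ B j)))
          = Lam.app (Lam.msub σ t) v := by
        show Lam.app _ _ = _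
        congr 1
        · refine Lam.msub_congr_fv (fun y hy => ?_)
          exact Function.update_of_ne (fun hyx => hj (by rw [← hyx]; exact hy)) _ _
        · show Function.update σ (xvar N₀ B j) v (xvar N₀ B j) = v
          exact Function.update_self _ _ _
      rwa [e1] at hres
    · intro B' i' hmem
      have hmem' : xvar N₀ B' i' ∈ t.fv ∪ {xvar N₀ B j} := hmem
      rcases Finset.mem_union.1 hmem' with hm | hm
      · have hne : xvar N₀ B' i' ≠ xvar N₀ B j := fun hcontra => hj (hcontra ▸ hm)
        rw [Function.update_of_ne hne]
        exact hcov B' i' hm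
      · have heqx : xvar N₀ B' i' = xvar N₀ B j := Finset.mem_singleton.1 hm
        rcases xvar_inj heqx with ⟨rfl, rfl⟩
        rw [Function.update_self]
        exact hv
  | @all A t₀' hphi ih =>
    intro t heq I σ hI hcov
    show Lam.msub σ t ∈ ⋂ (G) (_ : Saturated G), interpC Saturated A (Interp.cons G I)
    refine Set.mem_iInter.2 (fun G => Set.mem_iInter.2 (fun hG => ?_))
    set Y := t.fv.sup id + A.fv.sup id + 1 with hYdef
    have hYt : ∀ m ∈ t.fv, m < Y := by
      intro m hm
      have := Finset.le_sup (f := id) hm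
      simp only [id] at this
      omega
    have hYA : Y + 1 ∉ A.fv := by
      intro hmem
      have := Finset.le_sup (f := id) hmem
      simp only [id] at this
      omega
    set I' := Function.update I Y G with hI'def
    have hI' : ∀ n, Saturated (I' n) := by
      intro n
      by_cases h : n = Y
      · rw [hI'def, h]; exact (congrArg Saturated (Function.update_self Y G I)).mpr hG
      · rw [hI'def]; exact (congrArg Saturated (Function.update_of_ne h G I)).mpr (hI n)
    have hres := ih Y t heq I' σ hI' ?_
    · rw [interp_subst A 0 (Ty.var Y) I'] at hres
      have e1 : interpC Saturated (Ty.var Y) I' = I' Y := rfl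
      have e2 : I' Y = G := Function.update_self _ _ _
      rw [e1, e2, insertAt_zero G I'] at hres
      have e3 : interpC Saturated A (Interp.cons G I')
          = interpC Saturated A (Interp.cons G I) := by
        refine interp_congr _ _ _ (fun n hn => ?_)
        cases n with
        | zero => rfl
        | succ m =>
          show I' m = I m
          have hmY : m ≠ Y := by
            intro hc
            exact hYA (hc ▸ Ty.mem_fv_all.1 (Ty.mem_fv_all.2 hn))
          exact Function.update_of_ne hmY _ _
      rwa [e3] at hres
    · intro B' i' hmem
      have e : interpC Saturated B' I' = interpC Saturated B' I := by
        refine interp_congr _ _ _ (fun m hmB' => ?_)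
        have h1 : m ≤ xvar N₀ B' i' := tyfv_le_xvar hmB'
        have h2 : xvar N₀ B' i' < Y := hYt _ hmem
        exact Function.update_of_ne (by omega) _ _
      rw [e]
      exact hcov B' i' hmem
/-- Corollary 1(ii): for `A` a ∀⁺ type, `|A|` is stable under
β-equivalence. -/
theorem sem_beta_stable (A : Ty) (hA : PosTy A) (t t' : Lam)
    (ht : t ∈ Sem A) (heq : Lam.BetaEq t t') : t' ∈ Sem A := by
  intro I hI
  set N₀ := ((t.fv ∪ t'.fv).sup id) + 1 with hN
  have h1 : t ∈ interpC Saturated A (IV N₀) := ht (IV N₀) (IV_sat N₀)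
  have h2 : Phi N₀ A t := (alphaF N₀ (Ty.size A)).1 A le_rfl hA t h1
  have hcov : Cov N₀ Lam.var I t' := by
    intro B i hmem
    exfalso
    have hle : id (xvar N₀ B i) ≤ (t.fv ∪ t'.fv).sup id :=
      Finset.le_sup (Finset.mem_union.2 (Or.inr hmem))
    have h4 := N0_le_xvar N₀ B i
    simp only [id] at hle
    omega
  have h3 := betaAdq N₀ h2 t' heq.symm I Lam.var hI hcov
  rwa [Lam.msub_id] at h3
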